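/- Fix a real number a with 0 < |a| < 1 and let S be the projective hypersurface S = {(z,w) ∈ ℂ × ℂ : −1 + |z|² + |w|² = a·|−1 + z² + w²|}. Then S is invariant under each of the following three one-parameter families of holomorphic transformations (t ∈ ℝ): (i) the rotations (z,w) ↦ (z·cos t − w·sin t, z·sin t + w·cos t); (ii) on the set where D := cosh t − z·sinh t ≠ 0, the maps (z,w) ↦ ( (z·cosh t − sinh t)/D, w/D ); (iii) on the set where D' := cosh t − w·sinh t ≠ 0, the maps (z,w) ↦ ( z/D', (w·cosh t − sinh t)/D' ). These are the flows of the vector fields −w∂_z + z∂_w, (−1+z²)∂_z + zw∂_w, and zw∂_z + (−1+w²)∂_w respectively. -/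

import Mathlib

open Complex

lemma hyp_aux (a t : ℝ) (z w : ℂ)
    (h : -1 + Complex.normSq z + Complex.normSq w = a * ‖-1 + z ^ 2 + w ^ 2‖)
    (hD : (Real.cosh t : ℂ) - z * (Real.sinh t : ℂ) ≠ 0) :
    -1 + Complex.normSq ((z * (Real.cosh t : ℂ) - (Real.sinh t : ℂ))
            / ((Real.cosh t : ℂ) - z * (Real.sinh t : ℂ)))
        + Complex.normSq (w / ((Real.cosh t : ℂ) - z * (Real.sinh t : ℂ)))
      = a * ‖-1
            + ((z * (Real.cosh t : ℂ) - (Real.sinh t : ℂ))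
                / ((Real.cosh t : ℂ) - z * (Real.sinh t : ℂ))) ^ 2
            + (w / ((Real.cosh t : ℂ) - z * (Real.sinh t : ℂ))) ^ 2‖ := by
  set c : ℂ := (Real.cosh t : ℂ) with hc
  set s : ℂ := (Real.sinh t : ℂ) with hs
  set D : ℂ := c - z * s with hDdef
  have hcs : c ^ 2 - s ^ 2 = 1 := by
    rw [hc, hs]
    norm_cast
    exact Real.cosh_sq_sub_sinh_sq t
  have hDn : Complex.normSq D ≠ 0 := (Complex.normSq_pos.mpr hD).ne'
  have hnum : Complex.normSq (z * c - s) + 1 = Complex.normSq D + Complex.normSq z := by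
    have key : ((Complex.normSq (z * c - s) + 1 : ℝ) : ℂ)
        = ((Complex.normSq D + Complex.normSq z : ℝ) : ℂ) := by
      push_cast
      rw [← Complex.mul_conj, ← Complex.mul_conj, ← Complex.mul_conj]
      simp only [map_sub, map_mul, hDdef, hc, hs, Complex.conj_ofReal]
      linear_combination (z * (starRingEnd ℂ) z - 1) * hcs
    exact_mod_cast key
  have h1 : -1 + Complex.normSq ((z * c - s) / D) + Complex.normSq (w / D)
      = (-1 + Complex.normSq z + Complex.normSq w) / Complex.normSq D := by
    rw [Complex.normSq_div, Complex.normSq_div]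
    field_simp
    linarith [hnum]
  have h2 : -1 + ((z * c - s) / D) ^ 2 + (w / D) ^ 2 = (-1 + z ^ 2 + w ^ 2) / D ^ 2 := by
    have hD2 : D ^ 2 ≠ 0 := pow_ne_zero 2 hD
    field_simp
    linear_combination (z ^ 2 - 1) * hcs
  rw [h1, h, h2, norm_div, norm_pow, Complex.sq_norm]
  ring


/-- Cartan's projective hypersurface of type (p3),
`S = {−1 + |z|² + |w|² = a·|−1 + z² + w²|}` with `0 < |a| < 1`, is invariant under the
three one-parameter families of holomorphic transformations that are the flows of
`−w∂_z + z∂_w`, `(−1+z²)∂_z + zw∂_w`, and `zw∂_z + (−1+w²)∂_w`, respectively. -/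
theorem projective_p3_symmetry (a : ℝ) (ha0 : 0 < |a|) (ha1 : |a| < 1) :
    (∀ (t : ℝ) (z w : ℂ),
      -1 + Complex.normSq z + Complex.normSq w
          = a * ‖-1 + z ^ 2 + w ^ 2‖ →
      -1 + Complex.normSq (z * (Real.cos t : ℂ) - w * (Real.sin t : ℂ))
          + Complex.normSq (z * (Real.sin t : ℂ) + w * (Real.cos t : ℂ))
        = a * ‖-1 + (z * (Real.cos t : ℂ) - w * (Real.sin t : ℂ)) ^ 2
              + (z * (Real.sin t : ℂ) + w * (Real.cos t : ℂ)) ^ 2‖) ∧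
    (∀ (t : ℝ) (z w : ℂ),
      -1 + Complex.normSq z + Complex.normSq w
          = a * ‖-1 + z ^ 2 + w ^ 2‖ →
      (Real.cosh t : ℂ) - z * (Real.sinh t : ℂ) ≠ 0 →
      -1 + Complex.normSq ((z * (Real.cosh t : ℂ) - (Real.sinh t : ℂ))
              / ((Real.cosh t : ℂ) - z * (Real.sinh t : ℂ)))
          + Complex.normSq (w / ((Real.cosh t : ℂ) - z * (Real.sinh t : ℂ)))
        = a * ‖-1
              + ((z * (Real.cosh t : ℂ) - (Real.sinh t : ℂ))
                  / ((Real.cosh t : ℂ) - z * (Real.sinh t : ℂ))) ^ 2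
              + (w / ((Real.cosh t : ℂ) - z * (Real.sinh t : ℂ))) ^ 2‖) ∧
    (∀ (t : ℝ) (z w : ℂ),
      -1 + Complex.normSq z + Complex.normSq w
          = a * ‖-1 + z ^ 2 + w ^ 2‖ →
      (Real.cosh t : ℂ) - w * (Real.sinh t : ℂ) ≠ 0 →
      -1 + Complex.normSq (z / ((Real.cosh t : ℂ) - w * (Real.sinh t : ℂ)))
          + Complex.normSq ((w * (Real.cosh t : ℂ) - (Real.sinh t : ℂ))
              / ((Real.cosh t : ℂ) - w * (Real.sinh t : ℂ)))
        = a * ‖-1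
              + (z / ((Real.cosh t : ℂ) - w * (Real.sinh t : ℂ))) ^ 2
              + ((w * (Real.cosh t : ℂ) - (Real.sinh t : ℂ))
                  / ((Real.cosh t : ℂ) - w * (Real.sinh t : ℂ))) ^ 2‖) := by

  refine ⟨?_, ?_, ?_⟩
  · intro t z w h
    set c : ℂ := (Real.cos t : ℂ) with hc
    set s : ℂ := (Real.sin t : ℂ) with hs
    have hcs : s ^ 2 + c ^ 2 = 1 := by
      rw [hc, hs]
      norm_cast
      exact Real.sin_sq_add_cos_sq t
    have hn : Complex.normSq (z * c - w * s) + Complex.normSq (z * s + w * c)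
        = Complex.normSq z + Complex.normSq w := by
      have key : ((Complex.normSq (z * c - w * s) + Complex.normSq (z * s + w * c) : ℝ) : ℂ)
          = ((Complex.normSq z + Complex.normSq w : ℝ) : ℂ) := by
        push_cast
        rw [← Complex.mul_conj, ← Complex.mul_conj, ← Complex.mul_conj, ← Complex.mul_conj]
        simp only [map_sub, map_add, map_mul, hc, hs, Complex.conj_ofReal]
        linear_combination (z * (starRingEnd ℂ) z + w * (starRingEnd ℂ) w) * hcs
      exact_mod_cast key
    have hp : (z * c - w * s) ^ 2 + (z * s + w * c) ^ 2 = z ^ 2 + w ^ 2 := by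
      linear_combination (z ^ 2 + w ^ 2) * hcs
    rw [add_assoc, hn, ← add_assoc,
      show (-1 + (z * c - w * s) ^ 2 + (z * s + w * c) ^ 2 : ℂ) = -1 + z ^ 2 + w ^ 2 by
        linear_combination hp]
    exact h
  · intro t z w h hD
    exact hyp_aux a t z w h hD
  · intro t z w h hD
    have h' : -1 + Complex.normSq w + Complex.normSq z = a * ‖-1 + w ^ 2 + z ^ 2‖ := by
      rw [show (-1 + w ^ 2 + z ^ 2) = (-1 + z ^ 2 + w ^ 2) by ring]
      linarith [h]
    have := hyp_aux a t w z h' hD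
    calc -1 + Complex.normSq (z / ((Real.cosh t : ℂ) - w * (Real.sinh t : ℂ)))
          + Complex.normSq ((w * (Real.cosh t : ℂ) - (Real.sinh t : ℂ))
              / ((Real.cosh t : ℂ) - w * (Real.sinh t : ℂ)))
        = -1 + Complex.normSq ((w * (Real.cosh t : ℂ) - (Real.sinh t : ℂ))
              / ((Real.cosh t : ℂ) - w * (Real.sinh t : ℂ)))
          + Complex.normSq (z / ((Real.cosh t : ℂ) - w * (Real.sinh t : ℂ))) := by ring
      _ = a * ‖-1
            + ((w * (Real.cosh t : ℂ) - (Real.sinh t : ℂ))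
                / ((Real.cosh t : ℂ) - w * (Real.sinh t : ℂ))) ^ 2
            + (z / ((Real.cosh t : ℂ) - w * (Real.sinh t : ℂ))) ^ 2‖ := this
      _ = _ := by rw [show (-1
            + ((w * (Real.cosh t : ℂ) - (Real.sinh t : ℂ))
                / ((Real.cosh t : ℂ) - w * (Real.sinh t : ℂ))) ^ 2
            + (z / ((Real.cosh t : ℂ) - w * (Real.sinh t : ℂ))) ^ 2)
          = (-1
            + (z / ((Real.cosh t : ℂ) - w * (Real.sinh t : ℂ))) ^ 2
            + ((w * (Real.cosh t : ℂ) - (Real.sinh t : ℂ))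
                / ((Real.cosh t : ℂ) - w * (Real.sinh t : ℂ))) ^ 2) by ring]
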